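/- Let G be a connected graph of order n ≥ 3. If λ₁(G) ≥ η(n), where η(n) is the largest root of x³ − (n−3)x² − (n−1)x + (n−3) = 0, then G is 1-tough unless G = K₁ ∨ (K_{n−2} ∪ K₁). -/

import Mathlib

set_option linter.unusedSectionVars false
set_option maxHeartbeats 1000000

open scoped Classical
open Matrix Polynomial

/-- The largest real eigenvalue (spectral radius for symmetric nonneg matrices). -/
noncomputable def lam1 {V : Type*} [Fintype V] (A : Matrix V V ℝ) : ℝ :=
  sSup {μ : ℝ | ∃ v : V → ℝ, v ≠ 0 ∧ A.mulVec v = μ • v}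

/-- The adjacency matrix of a simple graph, over ℝ. -/
noncomputable def adjMat {V : Type*} [Fintype V] (G : SimpleGraph V) : Matrix V V ℝ :=
  Matrix.of fun i j => if G.Adj i j then 1 else 0

/-- The number of connected components of G − S. -/
noncomputable def numComp {V : Type*} (G : SimpleGraph V) (S : Set V) : ℕ :=
  Nat.card ((G.induce Sᶜ).ConnectedComponent)

/-- `G` is `r`-tough. -/
def IsTough {V : Type*} [Fintype V] (r : ℝ) (G : SimpleGraph V) : Prop :=
  ∀ S : Finset V, 2 ≤ numComp G ↑S → r * (numComp G ↑S : ℝ) ≤ (S.card : ℝ)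

/-- `K_s ∨ (K_a ∪ (n - s - a) K₁)` on `Fin n`. -/
def splitJoin (s a n : ℕ) : SimpleGraph (Fin n) where
  Adj i j := i ≠ j ∧ (i.val < s ∨ j.val < s ∨ (i.val < s + a ∧ j.val < s + a))
  symm := ⟨by rintro i j ⟨h1, h2⟩; exact ⟨h1.symm, by tauto⟩⟩
  loopless := ⟨by rintro i ⟨h, -⟩; exact h rfl⟩

/-- `K_s ∨ (K_{m 0} ∪ ⋯ ∪ K_{m (c-1)})`. -/
def cliquesJoin (s c : ℕ) (m : Fin c → ℕ) :
    SimpleGraph (Fin s ⊕ (Σ i : Fin c, Fin (m i))) where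
  Adj x y := x ≠ y ∧ (x.isLeft ∨ y.isLeft ∨
    ∃ (i : Fin c) (a b : Fin (m i)), x = Sum.inr ⟨i, a⟩ ∧ y = Sum.inr ⟨i, b⟩)
  symm := ⟨by rintro x y ⟨h1, h2⟩; refine ⟨h1.symm, ?_⟩; tauto⟩
  loopless := ⟨by rintro x ⟨h, -⟩; exact h rfl⟩

/-! ### Auxiliary lemmas -/

section spec
variable {V : Type*} [Fintype V] [DecidableEq V] (G : SimpleGraph V)

lemma adjMat_sym : (adjMat G).IsHermitian := by
  ext i j
  simp [adjMat, Matrix.conjTranspose_apply, SimpleGraph.adj_comm]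

lemma adjMat_nonneg (i j : V) : 0 ≤ adjMat G i j := by
  unfold adjMat; dsimp; split <;> norm_num

lemma adjMat_zero_one (i j : V) : adjMat G i j = 0 ∨ adjMat G i j = 1 := by
  unfold adjMat; dsimp; split <;> simp

lemma adjMat_diag (i : V) : adjMat G i i = 0 := by simp [adjMat]

lemma eig_nonempty [Nonempty V] :
    {μ : ℝ | ∃ v : V → ℝ, v ≠ 0 ∧ (adjMat G).mulVec v = μ • v}.Nonempty := by
  have hA := adjMat_sym G
  obtain ⟨i⟩ := (inferInstance : Nonempty V)
  exact ⟨hA.eigenvalues i, ⇑(hA.eigenvectorBasis i),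
    (WithLp.ofLp_eq_zero 2).ne.2 (hA.eigenvectorBasis.orthonormal.ne_zero i), hA.mulVec_eigenvectorBasis i⟩

lemma hong (hδ : ∀ k : V, ∃ j, G.Adj k j) {μ : ℝ} {v : V → ℝ} (hv : v ≠ 0)
    (hev : (adjMat G).mulVec v = μ • v) :
    μ ^ 2 ≤ (∑ k : V, ∑ j : V, adjMat G k j) - (Fintype.card V - 1) := by
  classical
  set A := adjMat G with hA
  set d : V → ℝ := fun k => ∑ j, A k j with hd
  have hd1 : ∀ k, 1 ≤ d k := by
    intro k
    obtain ⟨j, hj⟩ := hδ k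
    have h1 : A k j = 1 := by simp [hA, adjMat, hj]
    calc (1:ℝ) = A k j := h1.symm
    _ ≤ ∑ j, A k j := Finset.single_le_sum (fun j _ => adjMat_nonneg G k j) (Finset.mem_univ j)
  obtain ⟨iw, hiw⟩ := Function.ne_iff.mp hv
  obtain ⟨i0, -, hmax⟩ := Finset.exists_max_image Finset.univ (fun i => |v i|)
    ⟨iw, Finset.mem_univ _⟩
  have hvi0 : 0 < |v i0| :=
    lt_of_lt_of_le (abs_pos.mpr hiw) (hmax iw (Finset.mem_univ iw))
  have hev2 : (A * A).mulVec v = (μ^2) • v := by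
    rw [← Matrix.mulVec_mulVec, hev, Matrix.mulVec_smul, hev, smul_smul, sq]
  have hrow : ∀ j, (A * A) i0 j = ∑ k, A i0 k * A k j := fun j => Matrix.mul_apply
  have hco : μ^2 * v i0 = ∑ j, (A*A) i0 j * v j := by
    have h2 := congrFun hev2 i0
    simp only [Matrix.mulVec, dotProduct, Pi.smul_apply, smul_eq_mul] at h2
    rw [← h2]
  have hAAnn : ∀ i j, 0 ≤ (A*A) i j := by
    intro i j; rw [Matrix.mul_apply]
    exact Finset.sum_nonneg fun k _ => mul_nonneg (adjMat_nonneg G i k) (adjMat_nonneg G k j)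
  have habs : μ^2 * |v i0| ≤ (∑ j, (A*A) i0 j) * |v i0| := by
    have h1 : μ^2 * |v i0| = |μ^2 * v i0| := by
      rw [abs_mul, abs_of_nonneg (sq_nonneg μ)]
    rw [h1, hco]
    calc |∑ j, (A*A) i0 j * v j| ≤ ∑ j, |(A*A) i0 j * v j| := Finset.abs_sum_le_sum_abs _ _
    _ = ∑ j, (A*A) i0 j * |v j| := by
        refine Finset.sum_congr rfl fun j _ => ?_
        rw [abs_mul, abs_of_nonneg (hAAnn i0 j)]
    _ ≤ ∑ j, (A*A) i0 j * |v i0| :=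
        Finset.sum_le_sum fun j _ =>
          mul_le_mul_of_nonneg_left (hmax j (Finset.mem_univ j)) (hAAnn i0 j)
    _ = (∑ j, (A*A) i0 j) * |v i0| := by rw [Finset.sum_mul]
  have hmu2 : μ^2 ≤ ∑ j, (A*A) i0 j := le_of_mul_le_mul_right (by linarith [habs]) hvi0
  have hrowsum : ∑ j, (A*A) i0 j = ∑ k, A i0 k * d k := by
    simp only [hrow]
    rw [Finset.sum_comm]
    exact Finset.sum_congr rfl fun k _ => by rw [← Finset.mul_sum]
  have hdiag : A i0 i0 = 0 := adjMat_diag G i0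
  have hsplit : ∑ k, A i0 k * d k = A i0 i0 * d i0 + ∑ k ∈ Finset.univ.erase i0, A i0 k * d k :=
    (Finset.add_sum_erase _ _ (Finset.mem_univ i0)).symm
  have hbd : ∑ k ∈ Finset.univ.erase i0, A i0 k * d k
      ≤ ∑ k ∈ Finset.univ.erase i0, (d k - 1 + A i0 k) := by
    refine Finset.sum_le_sum fun k _ => ?_
    rcases adjMat_zero_one G i0 k with h | h
    · rw [show A i0 k = 0 from h]; simp only [zero_mul, add_zero]; linarith [hd1 k]
    · rw [show A i0 k = 1 from h]; nlinarith [hd1 k]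
  have e1 : ∑ k ∈ Finset.univ.erase i0, (d k - 1 + A i0 k)
      = (∑ k, d k) - d i0 - (Fintype.card V - 1) + (d i0 - A i0 i0) := by
    have hc1 : (1:ℕ) ≤ Fintype.card V := Fintype.card_pos_iff.mpr ⟨i0⟩
    have e2 : ∑ k ∈ Finset.univ.erase i0, A i0 k = d i0 - A i0 i0 :=
      Finset.sum_erase_eq_sub (Finset.mem_univ i0)
    have e3 : ∑ k ∈ Finset.univ.erase i0, d k = (∑ k, d k) - d i0 :=
      Finset.sum_erase_eq_sub (Finset.mem_univ i0)
    have e4 : ∑ _k ∈ Finset.univ.erase i0, (1:ℝ) = (Fintype.card V : ℝ) - 1 := by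
      simp only [Finset.sum_const, Finset.card_erase_of_mem (Finset.mem_univ i0),
        Finset.card_univ, nsmul_eq_mul, mul_one]
      rw [Nat.cast_sub hc1]
      norm_num
    rw [Finset.sum_add_distrib, Finset.sum_sub_distrib, e2, e3, e4]
  have hfin : μ^2 ≤ (∑ k, d k) - (Fintype.card V - 1) := by
    rw [hdiag] at hsplit e1
    calc μ^2 ≤ ∑ j, (A*A) i0 j := hmu2
    _ = 0 * d i0 + ∑ k ∈ Finset.univ.erase i0, A i0 k * d k := by rw [hrowsum, hsplit]
    _ ≤ 0 * d i0 + ((∑ k, d k) - d i0 - (Fintype.card V - 1) + (d i0 - 0)) := by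
        rw [← e1]; linarith [hbd]
    _ = (∑ k, d k) - (Fintype.card V - 1) := by ring
  exact hfin

lemma edge_count [Nonempty V] :
    (∑ k : V, ∑ j : V, adjMat G k j)
      = (Fintype.card V : ℝ)^2 - (Fintype.card V : ℝ)
        - ((Finset.univ.offDiag.filter fun p : V × V => ¬ G.Adj p.1 p.2).card : ℝ) := by
  have hset : ((Finset.univ ×ˢ Finset.univ : Finset (V × V)).filter fun p => G.Adj p.1 p.2)
      = Finset.univ.offDiag.filter fun p : V × V => G.Adj p.1 p.2 := by
    ext p
    simp only [Finset.mem_filter, Finset.mem_product, Finset.mem_univ, true_and,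
      Finset.mem_offDiag]
    exact ⟨fun h => ⟨h.ne, h⟩, fun h => h.2⟩
  have h1 : ∑ k : V, ∑ j : V, adjMat G k j
      = ((Finset.univ.offDiag.filter fun p : V × V => G.Adj p.1 p.2).card : ℝ) := by
    unfold adjMat
    simp only [Matrix.of_apply]
    rw [← Finset.sum_product']
    rw [Finset.sum_boole, hset]
  have h2 := Finset.card_filter_add_card_filter_not
    (s := (Finset.univ : Finset V).offDiag) (p := fun p : V × V => G.Adj p.1 p.2)
  have h3 : (Finset.univ : Finset V).offDiag.card
      = Fintype.card V * Fintype.card V - Fintype.card V := by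
    rw [Finset.offDiag_card, Finset.card_univ]
  have h5 : Fintype.card V ≤ Fintype.card V * Fintype.card V :=
    Nat.le_mul_of_pos_left _ Fintype.card_pos
  have h6 := congrArg (Nat.cast : ℕ → ℝ) h2
  rw [h3, Nat.cast_sub h5] at h6
  push_cast at h6
  have h7 : ((Fintype.card V : ℝ))^2 = (Fintype.card V : ℝ) * Fintype.card V := sq _
  rw [h1]
  linarith [h6, h7]

lemma generic_bound [Nonempty V] (hδ : ∀ k : V, ∃ j, G.Adj k j)
    (hD : 2 * (Fintype.card V : ℝ) - 2
      ≤ ((Finset.univ.offDiag.filter fun p : V × V => ¬ G.Adj p.1 p.2).card : ℝ))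
    (hn : 3 ≤ Fintype.card V) :
    lam1 (adjMat G) ≤ (Fintype.card V : ℝ) - 2 := by
  have hn' : (3:ℝ) ≤ (Fintype.card V : ℝ) := by exact_mod_cast hn
  refine csSup_le (eig_nonempty G) ?_
  rintro μ ⟨v, hv, hev⟩
  have hb := hong G hδ hv hev
  rw [edge_count G] at hb
  have hμ2 : μ^2 ≤ (Fintype.card V : ℝ)^2 - 4*(Fintype.card V : ℝ) + 3 := by linarith
  nlinarith [hμ2, sq_nonneg (μ - ((Fintype.card V : ℝ) - 2))]

end spec

lemma eta_gt {n : ℕ} (hn : 3 ≤ n) {η : ℝ}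
    (hmax : ∀ x : ℝ, x ^ 3 - ((n : ℝ) - 3) * x ^ 2 - ((n : ℝ) - 1) * x + ((n : ℝ) - 3) = 0
      → x ≤ η) : (n : ℝ) - 2 < η := by
  set f : ℝ → ℝ := fun x => x ^ 3 - ((n : ℝ) - 3) * x ^ 2 - ((n : ℝ) - 1) * x + ((n : ℝ) - 3)
    with hf
  have hn3 : (3:ℝ) ≤ (n:ℝ) := by exact_mod_cast hn
  have hab : (n:ℝ) - 2 ≤ (n:ℝ) := by linarith
  have hcont : ContinuousOn f (Set.Icc ((n:ℝ) - 2) n) := by fun_prop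
  have hfa : f ((n:ℝ) - 2) = -1 := by rw [hf]; ring
  have hfb : f (n:ℝ) = 2*(n:ℝ)^2 + 2*(n:ℝ) - 3 := by rw [hf]; ring
  have h0 : (0:ℝ) ∈ Set.Icc (f ((n:ℝ)-2)) (f (n:ℝ)) := by
    rw [hfa, hfb]; constructor <;> nlinarith
  obtain ⟨x, hx, hfx⟩ := intermediate_value_Icc hab hcont h0
  have hxη : x ≤ η := hmax x hfx
  have hne : x ≠ (n:ℝ) - 2 := by
    intro h; rw [h, hfa] at hfx; norm_num at hfx
  rcases hx with ⟨h1, -⟩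
  cases lt_or_eq_of_le h1 with
  | inl h => linarith
  | inr h => exact absurd h.symm hne

section part
variable {α ι : Type*} [Fintype α] [Fintype ι] [DecidableEq ι] (f : α → ι)

lemma fiber_sum : ∑ i : ι, (Finset.univ.filter fun a => f a = i).card = Fintype.card α := by
  rw [← Finset.card_univ,
    Finset.card_eq_sum_card_fiberwise (f := f) (t := Finset.univ) (fun a _ => Finset.mem_univ _)]

lemma fiber_pos (hf : Function.Surjective f) (i : ι) :
    0 < (Finset.univ.filter fun a => f a = i).card := by
  obtain ⟨a, ha⟩ := hf i
  exact Finset.card_pos.mpr ⟨a, Finset.mem_filter.mpr ⟨Finset.mem_univ _, ha⟩⟩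

lemma pair_card :
    ((Finset.univ : Finset (α × α)).filter fun p => f p.1 = f p.2).card
      = ∑ i : ι, ((Finset.univ.filter fun a => f a = i).card)^2 := by
  rw [Finset.card_eq_sum_card_fiberwise (f := fun p => f p.1) (t := Finset.univ)
    (fun p _ => Finset.mem_univ _)]
  refine Finset.sum_congr rfl fun i _ => ?_
  have h : (((Finset.univ : Finset (α × α)).filter fun p => f p.1 = f p.2).filter
      fun p => f p.1 = i)
      = (Finset.univ.filter fun a => f a = i) ×ˢ (Finset.univ.filter fun a => f a = i) := by
    ext p
    simp only [Finset.mem_filter, Finset.mem_univ, true_and, Finset.mem_product]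
    constructor
    · rintro ⟨h1, h2⟩; exact ⟨h2, h2 ▸ h1.symm⟩
    · rintro ⟨h1, h2⟩; exact ⟨h1.trans h2.symm, h1⟩
  rw [h, Finset.card_product, sq]

lemma cross_card :
    (((Finset.univ : Finset (α × α)).filter fun p => f p.1 ≠ f p.2).card : ℤ)
      = (Fintype.card α : ℤ)^2
        - ∑ i : ι, (((Finset.univ.filter fun a => f a = i).card : ℤ))^2 := by
  have h := Finset.card_filter_add_card_filter_not
    (s := (Finset.univ : Finset (α × α))) (p := fun p => f p.1 = f p.2)
  rw [pair_card f] at h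
  have hcard : (Finset.univ : Finset (α × α)).card = Fintype.card α ^ 2 := by
    simp [Finset.card_univ, sq]
  rw [hcard] at h
  have h2 := congrArg (Nat.cast : ℕ → ℤ) h
  push_cast at h2
  linarith

end part

lemma sumsq_bound {ι : Type*} [Fintype ι] (m : ι → ℤ) (h1 : ∀ i, 1 ≤ m i) (N : ℤ)
    (hN : ∑ i, m i = N) :
    ∑ i, (m i)^2 ≤ N + (N - Fintype.card ι + 1) * (N - Fintype.card ι) := by
  set c : ℤ := (Fintype.card ι : ℤ) with hc
  have hub : ∀ i, m i ≤ N - (c - 1) := by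
    intro i
    have h2 : ∑ k ∈ Finset.univ.erase i, m k = N - m i := by
      rw [Finset.sum_erase_eq_sub (Finset.mem_univ i), hN]
    have h3 : (c - 1) ≤ ∑ k ∈ Finset.univ.erase i, m k := by
      have h4 := Finset.card_nsmul_le_sum (Finset.univ.erase i) m 1 (fun k _ => h1 k)
      have h5 : (1:ℕ) ≤ Fintype.card ι := Fintype.card_pos_iff.mpr ⟨i⟩
      rw [Finset.card_erase_of_mem (Finset.mem_univ i), Finset.card_univ] at h4
      rw [hc]
      calc (Fintype.card ι : ℤ) - 1 = ((Fintype.card ι - 1 : ℕ) : ℤ) := by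
            rw [Nat.cast_sub h5]; norm_num
      _ ≤ ∑ k ∈ Finset.univ.erase i, m k := by simpa using h4
    linarith
  have hterm : ∀ i, (m i)^2 ≤ m i + (N - c + 1) * (m i - 1) := by
    intro i
    nlinarith [h1 i, hub i, mul_nonneg (sub_nonneg.2 (h1 i)) (sub_nonneg.2 (hub i))]
  calc ∑ i, (m i)^2 ≤ ∑ i, (m i + (N - c + 1) * (m i - 1)) := Finset.sum_le_sum fun i _ => hterm i
  _ = N + (N - c + 1) * (N - c) := by
      rw [Finset.sum_add_distrib, hN, ← Finset.mul_sum, Finset.sum_sub_distrib, hN]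
      simp [Finset.card_univ, hc]

lemma arith_core (n s c N : ℤ) (hn : 3 ≤ n) (hs : 1 ≤ s) (hN : N = n - s)
    (hc : s+1 ≤ c) (hc2 : 2 ≤ c) (hcN : c ≤ N)
    (hex : ¬(s = 1 ∧ c = 2)) (hex2 : ¬(n = 5 ∧ s = 2 ∧ c = 3)) :
    2*n-2 ≤ N*N - N - (N-c+1)*(N-c) := by
  subst hN
  rcases eq_or_lt_of_le hs with h1 | h1
  · have hc3 : 3 ≤ c := by
      rcases eq_or_lt_of_le hc2 with h|h
      · exact absurd ⟨h1.symm, h.symm⟩ hex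
      · omega
    nlinarith [mul_nonneg (sub_nonneg.2 hc3) (sub_nonneg.2 hcN), sq_nonneg (c-3),
      sq_nonneg (n-s-c)]
  · have hs2 : 2 ≤ s := h1
    rcases eq_or_lt_of_le hc with h2 | h2
    · rcases eq_or_lt_of_le (show 2*s+1 ≤ n by omega) with h3 | h3
      · have hsne : s ≠ 2 := by rintro rfl; exact hex2 ⟨by omega, rfl, by omega⟩
        have hs3 : 3 ≤ s := by omega
        nlinarith
      · nlinarith [mul_nonneg (sub_nonneg.2 hs2) (sub_nonneg.2 h1.le),
          mul_nonneg (sub_nonneg.2 (show (1:ℤ) ≤ s by omega))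
            (sub_nonneg.2 (show 2*s+2 ≤ n by omega))]
    · have hc' : s + 2 ≤ c := by omega
      nlinarith [mul_nonneg (sub_nonneg.2 hc') (sub_nonneg.2 hcN),
        mul_nonneg (sub_nonneg.2 hs2) (sub_nonneg.2 (show 2*s+1 ≤ n by omega)),
        sq_nonneg (n-s-c)]


lemma five_bound (G : SimpleGraph (Fin 5)) (S : Finset (Fin 5)) (u w x y z : Fin 5)
    (hU : (Finset.univ : Finset (Fin 5)) = {u,w,x,y,z})
    (huw : u ≠ w) (hux : u ≠ x) (huy : u ≠ y) (huz : u ≠ z)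
    (hwx : w ≠ x) (hwy : w ≠ y) (hwz : w ≠ z)
    (hxy : x ≠ y) (hxz : x ≠ z) (hyz : y ≠ z)
    (huS : u ∈ S) (hwS : w ∈ S) (hxS : x ∉ S) (hyS : y ∉ S) (hzS : z ∉ S)
    (hadj : ∀ a b, G.Adj a b ↔ a ≠ b ∧ (a ∈ S ∨ b ∈ S)) :
    lam1 (adjMat G) ≤ 3 := by
  refine csSup_le (eig_nonempty G) ?_
  rintro μ ⟨v, hv, hev⟩
  by_contra hcon
  push_neg at hcon
  have hμ : 3 < μ := hcon
  have hA : ∀ i j, adjMat G i j = if (i ≠ j ∧ (i ∈ S ∨ j ∈ S)) then 1 else 0 := by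
    intro i j
    unfold adjMat
    simp only [Matrix.of_apply]
    exact if_congr (hadj i j) rfl rfl
  have heq : ∀ t, μ * v t = ∑ j ∈ ({u,w,x,y,z} : Finset (Fin 5)), adjMat G t j * v j := by
    intro t
    have h := congrFun hev t
    simp only [Matrix.mulVec, dotProduct, Pi.smul_apply, smul_eq_mul] at h
    rw [← hU, h]
  have hexp : ∀ t, μ * v t = adjMat G t u * v u + adjMat G t w * v w + adjMat G t x * v x
      + adjMat G t y * v y + adjMat G t z * v z := by
    intro t
    rw [heq t]
    rw [Finset.sum_insert (by simp [huw, hux, huy, huz]),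
      Finset.sum_insert (by simp [hwx, hwy, hwz]),
      Finset.sum_insert (by simp [hxy, hxz]),
      Finset.sum_insert (by simp [hyz]),
      Finset.sum_singleton]
    ring
  have eu := hexp u
  have ew := hexp w
  have ex := hexp x
  have ey := hexp y
  have ez := hexp z
  simp only [hA, ne_eq, huw, hux, huy, huz, hwx, hwy, hwz, hxy, hxz, hyz,
    Ne.symm huw, Ne.symm hux, Ne.symm huy, Ne.symm huz, Ne.symm hwx, Ne.symm hwy,
    Ne.symm hwz, Ne.symm hxy, Ne.symm hxz, Ne.symm hyz,
    huS, hwS, hxS, hyS, hzS, not_true_eq_false, not_false_eq_true, false_and, true_and,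
    if_true, if_false, and_self, or_true, true_or, or_false, false_or, and_true, and_false,
    if_neg, not_and, one_mul, zero_mul, zero_add, add_zero] at eu ew ex ey ez
  have hp : μ * (v u + v w) = (v u + v w) + 2*(v x + v y + v z) := by
    ring_nf; ring_nf at eu ew; linarith
  have hq : μ * (v x + v y + v z) = 3*(v u + v w) := by
    ring_nf; ring_nf at ex ey ez; linarith
  have hP : (μ*μ - μ - 6) * (v u + v w) = 0 := by linear_combination μ * hp + 2 * hq
  have hpos : 0 < μ*μ - μ - 6 := by nlinarith
  have hpz : v u + v w = 0 := by
    rcases mul_eq_zero.mp hP with h | h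
    · linarith
    · exact h
  have hvx : v x = 0 := by
    have h1 : μ * v x = 0 := by rw [ex, hpz]
    rcases mul_eq_zero.mp h1 with h | h
    · linarith
    · exact h
  have hvy : v y = 0 := by
    have h1 : μ * v y = 0 := by rw [ey, hpz]
    rcases mul_eq_zero.mp h1 with h | h
    · linarith
    · exact h
  have hvz : v z = 0 := by
    have h1 : μ * v z = 0 := by rw [ez, hpz]
    rcases mul_eq_zero.mp h1 with h | h
    · linarith
    · exact h
  have hvu : v u = 0 := by
    have h1 : μ * v u = - v u := by rw [eu]; rw [hvx, hvy, hvz]; linarith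
    have h2 : (μ + 1) * v u = 0 := by linarith [h1]
    rcases mul_eq_zero.mp h2 with h | h
    · linarith
    · exact h
  have hvw : v w = 0 := by linarith
  apply hv
  funext t
  have ht := Finset.mem_univ t
  rw [hU] at ht
  simp only [Finset.mem_insert, Finset.mem_singleton] at ht
  rcases ht with rfl | rfl | rfl | rfl | rfl <;> simpa

/-! ### Main theorem -/

/-- If λ₁(G) ≥ η(n), the largest root of
x³ − (n−3)x² − (n−1)x + (n−3) = 0, then G is 1-tough unless G = K₁ ∨ (K_{n−2} ∪ K₁). -/
theorem stmt1 (n : ℕ) (hn : 3 ≤ n)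
    (G : SimpleGraph (Fin n)) (hG : G.Connected) (η : ℝ)
    (hroot : η ^ 3 - ((n : ℝ) - 3) * η ^ 2 - ((n : ℝ) - 1) * η + ((n : ℝ) - 3) = 0)
    (hmax : ∀ x : ℝ, x ^ 3 - ((n : ℝ) - 3) * x ^ 2 - ((n : ℝ) - 1) * x + ((n : ℝ) - 3) = 0
      → x ≤ η)
    (hspec : η ≤ lam1 (adjMat G)) :
    IsTough 1 G ∨ Nonempty (G ≃g splitJoin 1 (n - 2) n) := by
  by_cases ht : IsTough 1 G
  · exact Or.inl ht
  unfold IsTough at ht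
  push_neg at ht
  obtain ⟨S, hc2, hlt⟩ := ht
  -- basic setup
  have hηgt : (n : ℝ) - 2 < η := eta_gt hn hmax
  have hδ : ∀ k : Fin n, ∃ j, G.Adj k j := by
    intro k
    have hnt : Nontrivial (Fin n) := by
      have : 1 < n := by omega
      exact Fin.nontrivial_iff_two_le.mpr (by omega)
    obtain ⟨j, hj⟩ := exists_ne k
    obtain ⟨w⟩ := hG.preconnected k j
    cases w with
    | nil => exact absurd rfl hj.symm
    | cons h _ => exact ⟨_, h⟩
  -- the contradiction machine
  have hDbound : ¬ (2 * (n : ℝ) - 2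
      ≤ ((Finset.univ.offDiag.filter fun p : Fin n × Fin n => ¬ G.Adj p.1 p.2).card : ℝ)) := by
    intro hD
    have hne : Nonempty (Fin n) := ⟨⟨0, by omega⟩⟩
    have := generic_bound G hδ (by rwa [Fintype.card_fin]) (by rwa [Fintype.card_fin])
    rw [Fintype.card_fin] at this
    linarith
  -- component setup
  set Ω : Set (Fin n) := (↑S)ᶜ with hΩdef
  set H := G.induce Ω with hHdef
  set κ : ↥Ω → H.ConnectedComponent := fun x => H.connectedComponentMk x with hκdef
  have hκsurj : Function.Surjective κ := fun k => k.exists_rep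
  set c : ℕ := numComp G ↑S with hcdef
  have hcCC : c = Fintype.card H.ConnectedComponent := Nat.card_eq_fintype_card
  set s : ℕ := S.card with hsdef
  have hsc : s + 1 ≤ c := by
    have : (s : ℝ) < c := by rw [one_mul] at hlt; exact_mod_cast hlt
    exact_mod_cast Nat.succ_le_of_lt (by exact_mod_cast this)
  set N : ℕ := Fintype.card ↥Ω with hNdef
  have hNval : N = n - s := by
    have h9 : Fintype.card ↥((↑S : Set (Fin n))ᶜ) = n - S.card := by
      rw [Fintype.card_compl_set]; simp
    exact h9
  have hs1 : 1 ≤ s := by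
    by_contra h
    have hS0 : S = ∅ := by
      rw [← Finset.card_eq_zero]; omega
    have huniv : Ω = Set.univ := by rw [hΩdef, hS0]; simp
    have hc1 : c = 1 := by
      rw [hcdef, hS0]
      unfold numComp
      have h1 : ((↑(∅ : Finset (Fin n)) : Set (Fin n))ᶜ) = Set.univ := by simp
      rw [h1, Nat.card_congr (SimpleGraph.induceUnivIso G).connectedComponentEquiv,
        Nat.card_eq_one_iff_unique]
      constructor
      · exact hG.preconnected.subsingleton_connectedComponent
      · obtain ⟨v⟩ := hG.nonempty
        exact ⟨G.connectedComponentMk v⟩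
    omega
  have hcN : c ≤ N := by
    rw [hcCC, hNdef]
    exact Fintype.card_le_of_surjective κ hκsurj
  -- the cross pairs on Ω
  set Yset : Finset (↥Ω × ↥Ω) := Finset.univ.filter (fun p => κ p.1 ≠ κ p.2) with hYdef
  set Dset : Finset (Fin n × Fin n) :=
    Finset.univ.offDiag.filter (fun p => ¬ G.Adj p.1 p.2) with hDdef
  have hHGadj : ∀ x y : ↥Ω, H.Adj x y ↔ G.Adj ↑x ↑y := by
    intro x y
    rw [hHdef]
    simp [SimpleGraph.comap_adj, Function.Embedding.coe_subtype]
  have hcrossD : ∀ x y : ↥Ω, κ x ≠ κ y → ((↑x : Fin n), (↑y : Fin n)) ∈ Dset := by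
    intro x y hxy
    rw [hDdef]
    refine Finset.mem_filter.mpr ⟨Finset.mem_offDiag.mpr
      ⟨Finset.mem_univ _, Finset.mem_univ _, ?_⟩, ?_⟩
    · intro h
      exact hxy (by rw [Subtype.ext h])
    · intro hadj
      exact hxy (SimpleGraph.ConnectedComponent.sound ((hHGadj x y).mpr hadj).reachable)
  have hYD : Yset.card ≤ Dset.card := by
    apply Finset.card_le_card_of_injOn (fun p => ((↑p.1 : Fin n), (↑p.2 : Fin n)))
    · intro p hp
      rw [hYdef] at hp
      exact hcrossD p.1 p.2 (Finset.mem_filter.mp hp).2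
    · intro p _ q _ h
      have h1 : (↑p.1 : Fin n) = ↑q.1 := congrArg Prod.fst h
      have h2 : (↑p.2 : Fin n) = ↑q.2 := congrArg Prod.snd h
      exact Prod.ext (Subtype.ext h1) (Subtype.ext h2)
  set m : H.ConnectedComponent → ℕ := fun k => (Finset.univ.filter fun a => κ a = k).card
    with hmdef
  have hYcard : (Yset.card : ℤ) = (N:ℤ)^2 - ∑ k, ((m k : ℤ))^2 := by
    rw [hYdef]
    have := cross_card κ
    push_cast at this ⊢
    rw [hNdef]
    exact this
  have hmssum : ∑ k, (m k : ℤ) = (N:ℤ) := by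
    rw [hmdef, hNdef]
    push_cast [← fiber_sum κ]
    rfl -- may fail
  have hm1 : ∀ k, 1 ≤ (m k : ℤ) := fun k => by
    exact_mod_cast fiber_pos κ hκsurj k
  have hmsq : ∑ k, ((m k : ℤ))^2 ≤ (N:ℤ) + ((N:ℤ) - c + 1) * ((N:ℤ) - c) := by
    have := sumsq_bound (fun k => (m k : ℤ)) hm1 (N:ℤ) hmssum
    rwa [← hcCC] at this
  -- the image of the cross pairs in `Fin n × Fin n`
  set Xset : Finset (Fin n × Fin n) :=
    Yset.image (fun p => ((↑p.1 : Fin n), (↑p.2 : Fin n))) with hXdef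
  have hinj : Set.InjOn (fun p : ↥Ω × ↥Ω => ((↑p.1 : Fin n), (↑p.2 : Fin n))) ↑Yset := by
    intro p _ q _ h
    exact Prod.ext (Subtype.ext (congrArg Prod.fst h)) (Subtype.ext (congrArg Prod.snd h))
  have hXcard : Xset.card = Yset.card := Finset.card_image_of_injOn hinj
  have hXD : Xset ⊆ Dset := by
    intro p hp
    rw [hXdef] at hp
    obtain ⟨q, hq, rfl⟩ := Finset.mem_image.mp hp
    exact hcrossD q.1 q.2 (Finset.mem_filter.mp hq).2
  have hmemX : ∀ a b : Fin n,
      ((a, b) ∈ Xset ↔ ∃ (ha : a ∈ Ω) (hb : b ∈ Ω), κ ⟨a, ha⟩ ≠ κ ⟨b, hb⟩) := by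
    intro a b
    constructor
    · intro h
      obtain ⟨⟨q1, q2⟩, hq, heq2⟩ := Finset.mem_image.mp h
      obtain ⟨rfl, rfl⟩ : (↑q1 : Fin n) = a ∧ (↑q2 : Fin n) = b :=
        ⟨congrArg Prod.fst heq2, congrArg Prod.snd heq2⟩
      exact ⟨q1.2, q2.2, (Finset.mem_filter.mp hq).2⟩
    · rintro ⟨ha, hb, hne⟩
      exact Finset.mem_image.mpr
        ⟨(⟨a, ha⟩, ⟨b, hb⟩), Finset.mem_filter.mpr ⟨Finset.mem_univ _, hne⟩, rfl⟩
  have hdich : (∀ a b : Fin n, a ≠ b → ¬ G.Adj a b → (a, b) ∈ Xset)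
      ∨ Yset.card + 2 ≤ Dset.card := by
    by_cases hsub : Dset ⊆ Xset
    · left
      intro a b hab hnadj
      exact hsub (Finset.mem_filter.mpr
        ⟨Finset.mem_offDiag.mpr ⟨Finset.mem_univ _, Finset.mem_univ _, hab⟩, hnadj⟩)
    · right
      obtain ⟨p, hpD, hpX⟩ := Finset.not_subset.mp hsub
      have hpD' := Finset.mem_filter.mp hpD
      have hpne : p.1 ≠ p.2 := (Finset.mem_offDiag.mp hpD'.1).2.2
      have hswapD : (p.2, p.1) ∈ Dset := by
        refine Finset.mem_filter.mpr ⟨Finset.mem_offDiag.mpr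
          ⟨Finset.mem_univ _, Finset.mem_univ _, hpne.symm⟩, ?_⟩
        intro h
        exact hpD'.2 h.symm
      have hswapX : (p.2, p.1) ∉ Xset := by
        intro h
        obtain ⟨ha, hb, hne⟩ := (hmemX p.2 p.1).mp h
        have h2 : (p.1, p.2) ∈ Xset := (hmemX p.1 p.2).mpr ⟨hb, ha, hne.symm⟩
        exact hpX h2
      have hsub2 : insert p (insert (p.2, p.1) Xset) ⊆ Dset := by
        intro q hq
        rcases Finset.mem_insert.mp hq with rfl | hq2
        · exact hpD
        rcases Finset.mem_insert.mp hq2 with rfl | hq3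
        · exact hswapD
        · exact hXD hq3
      have hcard2 : (insert p (insert (p.2, p.1) Xset)).card = Xset.card + 2 := by
        rw [Finset.card_insert_of_notMem, Finset.card_insert_of_notMem hswapX]
        · intro h
          rcases Finset.mem_insert.mp h with h1 | h1
          · exact hpne (congrArg Prod.fst h1)
          · exact hpX h1
      calc Yset.card + 2 = Xset.card + 2 := by rw [hXcard]
      _ = (insert p (insert (p.2, p.1) Xset)).card := hcard2.symm
      _ ≤ Dset.card := Finset.card_le_card hsub2
  -- case split
  by_cases hA : s = 1 ∧ c = 2
  · -- two components
    obtain ⟨hs1', hc2'⟩ := hA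
    have hNn1 : (N : ℤ) = (n : ℤ) - 1 := by
      rw [hNval, hs1']
      push_cast [Nat.cast_sub (by omega : 1 ≤ n)]
      ring
    have hcard2 : (Finset.univ : Finset H.ConnectedComponent).card = 2 := by
      rw [Finset.card_univ, ← hcCC, hc2']
    obtain ⟨k0, k1, hk01, hU2⟩ := Finset.card_eq_two.mp hcard2
    have hsum2 : (m k0 : ℤ) + m k1 = N := by
      rw [← hmssum, hU2, Finset.sum_pair hk01]
    have hY2 : (Yset.card : ℤ) = 2 * (m k0 : ℤ) * (m k1 : ℤ) := by
      rw [hYcard, hU2, Finset.sum_pair hk01]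
      nlinarith [hsum2]
    by_cases hone : m k0 = 1 ∨ m k1 = 1
    · obtain ⟨ka, kb, hkab, hU3, hmb⟩ : ∃ ka kb : H.ConnectedComponent, ka ≠ kb ∧
          (Finset.univ : Finset H.ConnectedComponent) = {ka, kb} ∧ m kb = 1 := by
        rcases hone with h | h
        · exact ⟨k1, k0, hk01.symm, by rw [hU2, Finset.pair_comm], h⟩
        · exact ⟨k0, k1, hk01, hU2, h⟩
      have hsuma : (m ka : ℤ) + m kb = N := by
        rw [← hmssum, hU3, Finset.sum_pair hkab]
      have hma : (m ka : ℤ) = (N : ℤ) - 1 := by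
        rw [hmb] at hsuma
        push_cast at hsuma ⊢
        linarith
      have hYa : (Yset.card : ℤ) = 2 * ((N : ℤ) - 1) := by
        rw [hYcard, hU3, Finset.sum_pair hkab, hma, hmb]
        push_cast
        ring
      rcases hdich with hchar | hbig
      · -- THE ISO CASE
        right
        have hScard1 : S.card = 1 := by rw [← hsdef, hs1']
        obtain ⟨u, hSu⟩ := Finset.card_eq_one.mp hScard1
        obtain ⟨w, hw⟩ := Finset.card_eq_one.mp
          (show (Finset.univ.filter fun a => κ a = kb).card = 1 from hmb)
        have hκw : κ w = kb := by
          have h0 : w ∈ Finset.univ.filter fun a => κ a = kb := by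
            rw [hw]; exact Finset.mem_singleton_self w
          exact (Finset.mem_filter.mp h0).2
        have hκwiff : ∀ x : ↥Ω, κ x = kb ↔ x = w := by
          intro x
          constructor
          · intro h
            have h0 : x ∈ Finset.univ.filter fun a => κ a = kb :=
              Finset.mem_filter.mpr ⟨Finset.mem_univ _, h⟩
            rw [hw] at h0
            exact Finset.mem_singleton.mp h0
          · rintro rfl; exact hκw
        have hxor : ∀ x y : ↥Ω, κ x ≠ κ y ↔ ¬(x = w ↔ y = w) := by
          intro x y
          have hx2 : κ x = ka ∨ κ x = kb := by
            have h0 := Finset.mem_univ (κ x); rw [hU3] at h0; simpa using h0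
          have hy2 : κ y = ka ∨ κ y = kb := by
            have h0 := Finset.mem_univ (κ y); rw [hU3] at h0; simpa using h0
          rw [← hκwiff x, ← hκwiff y]
          rcases hx2 with h1 | h1 <;> rcases hy2 with h2 | h2 <;> rw [h1, h2] <;>
            simp [hkab, hkab.symm]
        have hΩu : ∀ a : Fin n, a ∈ Ω ↔ a ≠ u := by
          intro a; rw [hΩdef, hSu]; simp
        have huw : u ≠ ↑w := ((hΩu ↑w).mp w.2).symm
        have hmemX2 : ∀ a b : Fin n,
            ((a,b) ∈ Xset ↔ a ≠ u ∧ b ≠ u ∧ ¬((a = ↑w) ↔ (b = ↑w))) := by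
          intro a b
          rw [hmemX a b]
          constructor
          · rintro ⟨ha, hb, hne⟩
            rw [hxor] at hne
            simp only [Subtype.ext_iff] at hne
            exact ⟨(hΩu a).mp ha, (hΩu b).mp hb, hne⟩
          · rintro ⟨ha, hb, hne⟩
            refine ⟨(hΩu a).mpr ha, (hΩu b).mpr hb, ?_⟩
            rw [hxor]
            simp only [Subtype.ext_iff]
            exact hne
        have hfinal : ∀ a b : Fin n,
            G.Adj a b ↔ a ≠ b ∧ (a = u ∨ b = u ∨ (a ≠ ↑w ∧ b ≠ ↑w)) := by
          intro a b
          constructor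
          · intro h
            refine ⟨h.ne, ?_⟩
            have hnx : (a, b) ∉ Xset := fun hx => (Finset.mem_filter.mp (hXD hx)).2 h
            rw [hmemX2] at hnx
            have hww : ¬(a = ↑w ∧ b = ↑w) := by
              rintro ⟨h1, h2⟩; exact h.ne (h1.trans h2.symm)
            by_cases hau : a = u
            · exact Or.inl hau
            by_cases hbu : b = u
            · exact Or.inr (Or.inl hbu)
            have hiff : a = ↑w ↔ b = ↑w :=
              not_not.mp (fun hniff => hnx ⟨hau, hbu, hniff⟩)
            refine Or.inr (Or.inr ⟨fun h9 => hww ⟨h9, hiff.mp h9⟩,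
              fun h9 => hww ⟨hiff.mpr h9, h9⟩⟩)
          · rintro ⟨hab, h⟩
            by_contra hnadj
            have hx := hchar a b hab hnadj
            rw [hmemX2] at hx
            obtain ⟨h1, h2, h3⟩ := hx
            rcases h with h | h | ⟨hw1, hw2⟩
            · exact h1 h
            · exact h2 h
            · exact h3 (iff_of_false hw1 hw2)
        have h0n : 0 < n := by omega
        have h1n : n - 1 < n := by omega
        set z0 : Fin n := ⟨0, h0n⟩ with hz0
        set zl : Fin n := ⟨n-1, h1n⟩ with hzl
        have hval0 : z0.val = 0 := rfl
        have hvall : zl.val = n - 1 := rfl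
        have hz0l : z0 ≠ zl := by
          intro h
          have h9 := congrArg Fin.val h
          rw [hval0, hvall] at h9
          omega
        set σ1 := Equiv.swap u z0 with hσ1
        set w' : Fin n := σ1 ↑w with hw'
        have hw'0 : w' ≠ z0 := by
          intro h
          apply huw
          have h9 : σ1 ↑w = σ1 u :=
            calc σ1 ↑w = w' := hw'.symm
            _ = z0 := h
            _ = σ1 u := (Equiv.swap_apply_left u z0).symm
          exact (σ1.injective h9).symm
        set σ2 := Equiv.swap w' zl with hσ2
        set e := σ1.trans σ2 with he
        have heu : e u = z0 := by
          simp only [he, Equiv.trans_apply, hσ1, Equiv.swap_apply_left, hσ2]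
          exact Equiv.swap_apply_of_ne_of_ne (Ne.symm hw'0) hz0l
        have hew : e ↑w = zl := by
          simp only [he, Equiv.trans_apply, ← hw', hσ2]
          exact Equiv.swap_apply_left w' zl
        have hlt1 : ∀ t : Fin n, (e t).val < 1 ↔ t = u := by
          intro t
          constructor
          · intro h
            have h2 : e t = z0 := by
              apply Fin.ext
              rw [hval0]
              omega
            exact e.injective (h2.trans heu.symm)
          · rintro rfl
            rw [heu, hval0]
            omega
        have hltl : ∀ t : Fin n, (e t).val < 1 + (n-2) ↔ t ≠ ↑w := by
          intro t
          have hval : (e t).val < n := (e t).isLt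
          have h1n2 : 1 + (n - 2) = n - 1 := by omega
          rw [h1n2]
          constructor
          · intro h hw2
            rw [hw2, hew, hvall] at h
            omega
          · intro h
            by_contra hcon
            push_neg at hcon
            have h9 : (e t).val = n - 1 := by omega
            have h2 : e t = zl := by
              apply Fin.ext
              rw [hvall]
              omega
            exact h (e.injective (h2.trans hew.symm))
        refine ⟨⟨e, ?_⟩⟩
        intro a b
        show (e a ≠ e b ∧ ((e a).val < 1 ∨ (e b).val < 1
          ∨ ((e a).val < 1 + (n-2) ∧ (e b).val < 1 + (n-2)))) ↔ G.Adj a b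
        rw [hfinal a b]
        constructor
        · rintro ⟨hne, hcase⟩
          refine ⟨fun h => hne (congrArg e h), ?_⟩
          rcases hcase with h | h | ⟨h1, h2⟩
          · exact Or.inl ((hlt1 a).mp h)
          · exact Or.inr (Or.inl ((hlt1 b).mp h))
          · exact Or.inr (Or.inr ⟨(hltl a).mp h1, (hltl b).mp h2⟩)
        · rintro ⟨hne, hcase⟩
          refine ⟨fun h => hne (e.injective h), ?_⟩
          rcases hcase with h | h | ⟨h1, h2⟩
          · exact Or.inl ((hlt1 a).mpr h)
          · exact Or.inr (Or.inl ((hlt1 b).mpr h))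
          · exact Or.inr (Or.inr ⟨(hltl a).mpr h1, (hltl b).mpr h2⟩)
      · exfalso
        apply hDbound
        have hD2 : (2*(n:ℤ) - 2) ≤ (Dset.card : ℤ) := by
          have := hbig
          have h5 : (Yset.card : ℤ) + 2 ≤ (Dset.card : ℤ) := by exact_mod_cast hbig
          rw [hYa] at h5
          omega
        push_cast at hD2 ⊢
        exact_mod_cast hD2
    · push_neg at hone
      exfalso
      apply hDbound
      have h20 : 2 ≤ (m k0 : ℤ) := by
        have := hm1 k0
        have h9 : m k0 ≠ 1 := hone.1
        omega
      have h21 : 2 ≤ (m k1 : ℤ) := by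
        have := hm1 k1
        have h9 : m k1 ≠ 1 := hone.2
        omega
      have hYb : (2*(n:ℤ) - 2) ≤ (Yset.card : ℤ) := by
        rw [hY2]
        nlinarith [hsum2, h20, h21, hNn1]
      have hD2 : (2*(n:ℤ) - 2) ≤ (Dset.card : ℤ) :=
        le_trans hYb (by exact_mod_cast hYD)
      push_cast at hD2 ⊢
      exact_mod_cast hD2
  by_cases hB : n = 5 ∧ s = 2 ∧ c = 3
  · obtain ⟨hn5, hs2', hc3'⟩ := hB
    subst hn5
    -- all fibers are singletons
    have hNc : (N : ℤ) = (c : ℤ) := by omega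
    have hm1' : ∀ k, (m k : ℤ) = 1 := by
      have hzero : ∑ k, ((m k : ℤ) - 1) = 0 := by
        rw [Finset.sum_sub_distrib, hmssum]
        simp only [Finset.sum_const, Finset.card_univ, nsmul_eq_mul, mul_one, ← hcCC]
        omega
      intro k
      have h9 := (Finset.sum_eq_zero_iff_of_nonneg
        (fun i _ => by linarith [hm1 i])).mp hzero k (Finset.mem_univ k)
      linarith
    rcases hdich with hchar | hbig
    · -- structured case: G = K₂ ∨ 3K₁, bound the spectral radius by 3 < η
      exfalso
      have hκinj : Function.Injective κ := by
        intro a b hab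
        by_contra hne
        have h9 : 1 < (Finset.univ.filter fun t => κ t = κ b).card :=
          Finset.one_lt_card.mpr
            ⟨a, Finset.mem_filter.mpr ⟨Finset.mem_univ _, hab⟩,
             b, Finset.mem_filter.mpr ⟨Finset.mem_univ _, rfl⟩, hne⟩
        have h10 : (Finset.univ.filter fun t => κ t = κ b).card = 1 := by
          exact_mod_cast hm1' (κ b)
        omega
      have hΩmem : ∀ a : Fin 5, a ∈ Ω ↔ a ∉ S := by
        intro a
        rw [hΩdef]
        simp
      have hadj : ∀ a b, G.Adj a b ↔ a ≠ b ∧ (a ∈ S ∨ b ∈ S) := by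
        intro a b
        constructor
        · intro h
          refine ⟨h.ne, ?_⟩
          by_contra hcon
          push_neg at hcon
          have ha : a ∈ Ω := (hΩmem a).mpr hcon.1
          have hb : b ∈ Ω := (hΩmem b).mpr hcon.2
          have hne : κ ⟨a, ha⟩ ≠ κ ⟨b, hb⟩ := by
            intro h9
            have := hκinj h9
            exact h.ne (congrArg Subtype.val this)
          have hx : (a, b) ∈ Xset := (hmemX a b).mpr ⟨ha, hb, hne⟩
          have hd := hXD hx
          exact (Finset.mem_filter.mp hd).2 h
        · rintro ⟨hab, hmem⟩
          by_contra hnadj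
          obtain ⟨ha, hb, -⟩ := (hmemX a b).mp (hchar a b hab hnadj)
          rcases hmem with h | h
          · exact ((hΩmem a).mp ha) h
          · exact ((hΩmem b).mp hb) h
      -- get the five vertices
      have hScard : S.card = 2 := by rw [← hsdef, hs2']
      obtain ⟨u, w, huw, hS⟩ := Finset.card_eq_two.mp hScard
      have hCcard : Sᶜ.card = 3 := by
        rw [Finset.card_compl, hScard]
        simp
      obtain ⟨x, y, z, hxy, hxz, hyz, hC⟩ := Finset.card_eq_three.mp hCcard
      have huS : u ∈ S := by rw [hS]; simp
      have hwS : w ∈ S := by rw [hS]; simp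
      have hxS : x ∉ S := by
        have : x ∈ Sᶜ := by rw [hC]; simp
        simpa using this
      have hyS : y ∉ S := by
        have : y ∈ Sᶜ := by rw [hC]; simp
        simpa using this
      have hzS : z ∉ S := by
        have : z ∈ Sᶜ := by rw [hC]; simp
        simpa using this
      have hux : u ≠ x := by rintro rfl; exact hxS huS
      have huy : u ≠ y := by rintro rfl; exact hyS huS
      have huz : u ≠ z := by rintro rfl; exact hzS huS
      have hwx : w ≠ x := by rintro rfl; exact hxS hwS
      have hwy : w ≠ y := by rintro rfl; exact hyS hwS
      have hwz : w ≠ z := by rintro rfl; exact hzS hwS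
      have hU5 : (Finset.univ : Finset (Fin 5)) = {u,w,x,y,z} := by
        symm
        apply Finset.eq_univ_of_card
        rw [Finset.card_insert_of_notMem (by simp [huw, hux, huy, huz]),
          Finset.card_insert_of_notMem (by simp [hwx, hwy, hwz]),
          Finset.card_insert_of_notMem (by simp [hxy, hxz]),
          Finset.card_insert_of_notMem (by simp [hyz]),
          Finset.card_singleton]
        simp
      have hb3 := five_bound G S u w x y z hU5 huw hux huy huz hwx hwy hwz hxy hxz hyz
        huS hwS hxS hyS hzS hadj
      have : ((5:ℕ):ℝ) - 2 < η := hηgt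
      norm_num at this
      linarith
    · exfalso
      apply hDbound
      have hY6 : (Yset.card : ℤ) = 6 := by
        rw [hYcard]
        have h9 : ∑ k, ((m k : ℤ))^2 = (c : ℤ) := by
          rw [Finset.sum_congr rfl (fun k _ => by rw [hm1' k, one_pow])]
          simp [Finset.card_univ, ← hcCC]
        rw [h9, hNc, hc3']
        norm_num
      have h5 : (Yset.card : ℤ) + 2 ≤ (Dset.card : ℤ) := by exact_mod_cast hbig
      rw [hY6] at h5
      have h8' : (8:ℝ) ≤ (Dset.card : ℝ) := by exact_mod_cast (by omega : (8:ℤ) ≤ (Dset.card : ℤ))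
      push_cast
      linarith
  -- generic case
  exfalso
  apply hDbound
  have hZ : (2*(n:ℤ) - 2) ≤ (Yset.card : ℤ) := by
    have harith := arith_core (n:ℤ) (s:ℤ) (c:ℤ) (N:ℤ) (by exact_mod_cast hn)
      (by exact_mod_cast hs1) (by rw [hNval]; push_cast [Nat.cast_sub (by omega : s ≤ n)]; ring)
      (by exact_mod_cast hsc) (by exact_mod_cast hc2) (by exact_mod_cast hcN)
      (by rintro ⟨h1, h2⟩; exact hA ⟨by exact_mod_cast h1, by exact_mod_cast h2⟩)
      (by rintro ⟨h1, h2, h3⟩; exact hB ⟨by exact_mod_cast h1, by exact_mod_cast h2,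
        by exact_mod_cast h3⟩)
    rw [hYcard]
    nlinarith [hmsq]
  have : (2*(n:ℤ) - 2) ≤ (Dset.card : ℤ) := le_trans hZ (by exact_mod_cast hYD)
  rw [hDdef] at this
  push_cast at this ⊢
  exact_mod_cast this
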